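/- Let k ≥ 1, λ ≥ 0, and let L : ℝ^{n×m} → ℝ be any function. Then inf over U ∈ ℝ^{n×k} and V ∈ ℝ^{m×k} of (λ/2)(‖U‖_F² + ‖V‖_F²) + L(UVᵀ) equals inf over W ∈ ℝ^{n×m} with rank(W) ≤ k of λ‖W‖_* + L(W). -/

import Mathlib

open Matrix

/-- The trace norm (nuclear norm) of a real matrix: the sum of its singular
values, i.e. the sum of the square roots of the eigenvalues of `Mᵀ * M`. -/
noncomputable def traceNorm {n d : ℕ} (M : Matrix (Fin n) (Fin d) ℝ) : ℝ :=
  ∑ i, Real.sqrt ((show (Mᵀ * M).IsHermitian by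
    rw [← Matrix.conjTranspose_eq_transpose_of_trivial]
    exact Matrix.isHermitian_conjTranspose_mul_self M).eigenvalues i)

lemma isHermitian_transpose_mul_self_real {n d : ℕ} (M : Matrix (Fin n) (Fin d) ℝ) :
    (Mᵀ * M).IsHermitian := by
  rw [← Matrix.conjTranspose_eq_transpose_of_trivial]
  exact Matrix.isHermitian_conjTranspose_mul_self M

/-- The squared Frobenius norm of a real matrix. -/
noncomputable def frobSq {n d : ℕ} (M : Matrix (Fin n) (Fin d) ℝ) : ℝ :=
  ∑ i, ∑ j, (M i j)^2

noncomputable def frobSq2 {α β : Type*} [Fintype α] [Fintype β] (M : Matrix α β ℝ) : ℝ :=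
  ∑ i, ∑ j, (M i j)^2

lemma frobSq2_eq_trace {α β : Type*} [Fintype α] [Fintype β] (M : Matrix α β ℝ) :
    frobSq2 M = Matrix.trace (M * Mᵀ) := by
  simp [frobSq2, Matrix.trace, Matrix.diag, Matrix.mul_apply, pow_two]

lemma frobSq2_nonneg {α β : Type*} [Fintype α] [Fintype β] (M : Matrix α β ℝ) :
    0 ≤ frobSq2 M :=
  Finset.sum_nonneg fun _ _ => Finset.sum_nonneg fun _ _ => sq_nonneg _

lemma frobSq2_transpose {α β : Type*} [Fintype α] [Fintype β] (M : Matrix α β ℝ) :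
    frobSq2 Mᵀ = frobSq2 M := by
  rw [frobSq2, frobSq2, Finset.sum_comm]
  rfl

lemma frobSq2_mul_orth {α β γ : Type*} [Fintype α] [Fintype β] [Fintype γ] [DecidableEq β]
    (A : Matrix α β ℝ) (E : Matrix β γ ℝ) (hE : E * Eᵀ = 1) :
    frobSq2 (A * E) = frobSq2 A := by
  rw [frobSq2_eq_trace, frobSq2_eq_trace, transpose_mul, ← Matrix.mul_assoc,
    Matrix.mul_assoc A E Eᵀ, hE, Matrix.mul_one]

lemma frobSq2_mul_contract {α β γ : Type*} [Fintype α] [Fintype β] [Fintype γ] [DecidableEq β] [DecidableEq γ]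
    (X : Matrix α β ℝ) (P : Matrix β γ ℝ) (hP : Pᵀ * P = 1) :
    frobSq2 (X * P) ≤ frobSq2 X := by
  set R : Matrix β β ℝ := 1 - P * Pᵀ with hR
  have hRt : Rᵀ = R := by simp [hR, transpose_sub, transpose_mul]
  have hRR : R * R = R := by
    simp only [hR, Matrix.mul_sub, Matrix.sub_mul, Matrix.one_mul, Matrix.mul_one]
    have h2 : P * Pᵀ * (P * Pᵀ) = P * Pᵀ := by
      rw [Matrix.mul_assoc P Pᵀ (P * Pᵀ), ← Matrix.mul_assoc Pᵀ P Pᵀ, hP, Matrix.one_mul]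
    rw [h2]
    abel
  have hsplit : X * Xᵀ = (X * P) * (X * P)ᵀ + (X * R) * (X * R)ᵀ := by
    rw [transpose_mul, transpose_mul, hRt]
    rw [show X * P * (Pᵀ * Xᵀ) = X * (P * Pᵀ) * Xᵀ by
      simp only [Matrix.mul_assoc]]
    rw [show X * R * (R * Xᵀ) = X * R * Xᵀ by
      simp only [Matrix.mul_assoc]
      rw [← Matrix.mul_assoc R R Xᵀ, hRR]]
    rw [← Matrix.add_mul, ← Matrix.mul_add]
    simp [hR]
  have := frobSq2_nonneg (X * R)
  rw [frobSq2_eq_trace, frobSq2_eq_trace] at *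
  rw [hsplit, Matrix.trace_add]
  linarith [this]

section Spectral
variable {n m : ℕ}

noncomputable def mu (M : Matrix (Fin n) (Fin m) ℝ) : Fin m → ℝ :=
  (isHermitian_transpose_mul_self_real M).eigenvalues

noncomputable def vv (M : Matrix (Fin n) (Fin m) ℝ) : Fin m → Fin m → ℝ :=
  fun l b => (Matrix.IsHermitian.eigenvectorUnitary
    (isHermitian_transpose_mul_self_real M) : Matrix (Fin m) (Fin m) ℝ) b l

lemma vv_eq_basis (M : Matrix (Fin n) (Fin m) ℝ) (l : Fin m) :
    vv M l = ⇑((isHermitian_transpose_mul_self_real M).eigenvectorBasis l) := by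
  funext b
  exact Matrix.IsHermitian.eigenvectorUnitary_apply _ b l

lemma mu_nonneg (M : Matrix (Fin n) (Fin m) ℝ) (l : Fin m) : 0 ≤ mu M l := by
  have h : (Mᴴ * M).PosSemidef := Matrix.posSemidef_conjTranspose_mul_self M
  exact h.eigenvalues_nonneg l

lemma eig_vv (M : Matrix (Fin n) (Fin m) ℝ) (l : Fin m) :
    (Mᴴ * M) *ᵥ vv M l = mu M l • vv M l := by
  rw [vv_eq_basis]
  exact Matrix.IsHermitian.mulVec_eigenvectorBasis _ l

lemma orth_vv (M : Matrix (Fin n) (Fin m) ℝ) (l l' : Fin m) :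
    vv M l ⬝ᵥ vv M l' = if l = l' then (1:ℝ) else 0 := by
  set Q := (Matrix.IsHermitian.eigenvectorUnitary
    (isHermitian_transpose_mul_self_real M) : Matrix (Fin m) (Fin m) ℝ) with hQ
  have h1 : star Q * Q = 1 := by
    exact Matrix.mem_unitaryGroup_iff'.mp (Matrix.IsHermitian.eigenvectorUnitary _).2
  have := congrFun (congrFun h1 l) l'
  simpa [Matrix.mul_apply, Matrix.one_apply, vv, dotProduct, Matrix.star_apply,
    mul_comm, hQ] using this

lemma dot_MM (M : Matrix (Fin n) (Fin m) ℝ) (x y : Fin m → ℝ) :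
    (M *ᵥ x) ⬝ᵥ (M *ᵥ y) = x ⬝ᵥ ((Mᴴ * M) *ᵥ y) := by
  rw [← Matrix.mulVec_mulVec, Matrix.dotProduct_mulVec x,
    show Mᴴ = Mᵀ from Matrix.conjTranspose_eq_transpose_of_trivial M,
    Matrix.vecMul_transpose]

lemma Mv_dot (M : Matrix (Fin n) (Fin m) ℝ) (l l' : Fin m) :
    (M *ᵥ vv M l) ⬝ᵥ (M *ᵥ vv M l') = mu M l' * (if l = l' then 1 else 0) := by
  rw [dot_MM, eig_vv, dotProduct_smul, orth_vv]
  simp [smul_eq_mul]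

lemma Mv_zero (M : Matrix (Fin n) (Fin m) ℝ) (l : Fin m) (h : mu M l = 0) :
    M *ᵥ vv M l = 0 := by
  have h2 : ∑ a, ((M *ᵥ vv M l) a)^2 = 0 := by
    have := Mv_dot M l l
    simp only [h, if_pos rfl, zero_mul, dotProduct] at this
    simpa [pow_two] using this
  funext a
  have := (Finset.sum_eq_zero_iff_of_nonneg
    (fun i _ => sq_nonneg ((M *ᵥ vv M l) i))).mp h2 a (Finset.mem_univ a)
  exact pow_eq_zero_iff (by norm_num) |>.mp this

lemma decomp_M (M : Matrix (Fin n) (Fin m) ℝ) (a : Fin n) (b : Fin m) :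
    M a b = ∑ l, (M *ᵥ vv M l) a * vv M l b := by
  set Q := (Matrix.IsHermitian.eigenvectorUnitary
    (isHermitian_transpose_mul_self_real M) : Matrix (Fin m) (Fin m) ℝ) with hQ
  have h1 : Q * star Q = 1 :=
    Matrix.mem_unitaryGroup_iff.mp (Matrix.IsHermitian.eigenvectorUnitary _).2
  have h2 : M * Q * star Q = M := by
    rw [Matrix.mul_assoc, h1, Matrix.mul_one]
  have h3 := congrFun (congrFun h2.symm a) b
  rw [h3]
  rw [Matrix.mul_apply]
  refine Finset.sum_congr rfl fun l _ => ?_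
  rw [Matrix.mul_apply]
  simp only [Matrix.star_apply, star_trivial]
  congr 1

lemma Mv_norm (M : Matrix (Fin n) (Fin m) ℝ) (l : Fin m) :
    ∑ a, ((M *ᵥ vv M l) a)^2 = mu M l := by
  have := Mv_dot M l l
  simp only [if_pos rfl, mul_one, dotProduct] at this
  simpa [pow_two] using this

lemma vv_norm (M : Matrix (Fin n) (Fin m) ℝ) (l : Fin m) :
    ∑ b, (vv M l b)^2 = 1 := by
  have := orth_vv M l l
  simp only [if_pos rfl, dotProduct] at this
  simpa [pow_two] using this

lemma sum_subtype_eq_sum_univ {m : ℕ} (p : Fin m → Prop) [DecidablePred p] (g : Fin m → ℝ)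
    (hg : ∀ l, ¬ p l → g l = 0) : ∑ i : {l // p l}, g i.1 = ∑ l, g l := by
  rw [← Finset.sum_subtype (Finset.univ.filter p) (by simp) g]
  exact Finset.sum_filter_of_ne (fun l _ h => by by_contra hp; exact h (hg l hp))

end Spectral

lemma frobSq_eq_frobSq2 {n d : ℕ} (M : Matrix (Fin n) (Fin d) ℝ) : frobSq M = frobSq2 M := rfl

lemma traceNorm_eq_sum_sqrt_mu {n m : ℕ} (W : Matrix (Fin n) (Fin m) ℝ) :
    traceNorm W = ∑ l, Real.sqrt (mu W l) := rfl

lemma exists_factorization {n m k : ℕ} (W : Matrix (Fin n) (Fin m) ℝ) (hrank : W.rank ≤ k) :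
    ∃ (U : Matrix (Fin n) (Fin k) ℝ) (V : Matrix (Fin m) (Fin k) ℝ),
      U * Vᵀ = W ∧ frobSq U + frobSq V = 2 * traceNorm W := by
  classical
  set μ := mu W with hμdef
  set σ : Fin m → ℝ := fun l => Real.sqrt (μ l) with hσdef
  have hcard : Fintype.card {l // μ l ≠ 0} ≤ Fintype.card (Fin k) := by
    have h1 := (isHermitian_transpose_mul_self_real W).rank_eq_card_non_zero_eigs
    have h2 : (Wᴴ * W).rank = W.rank := by
      rw [show Wᴴ = Wᵀ from Matrix.conjTranspose_eq_transpose_of_trivial W]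
      exact Matrix.rank_transpose_mul_self W
    have h1' : (Wᴴ * W).rank = Fintype.card {l // μ l ≠ 0} := h1
    rw [Fintype.card_fin]
    omega
  obtain ⟨f⟩ := Function.Embedding.nonempty_of_card_le hcard
  have hμpos : ∀ i : {l // μ l ≠ 0}, 0 < μ i.1 :=
    fun i => lt_of_le_of_ne (mu_nonneg W i.1) (Ne.symm i.2)
  have hσpos : ∀ i : {l // μ l ≠ 0}, 0 < σ i.1 := fun i => Real.sqrt_pos.mpr (hμpos i)
  set A : Matrix (Fin n) {l // μ l ≠ 0} ℝ :=
    fun a i => (W *ᵥ vv W i.1) a / Real.sqrt (σ i.1) with hA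
  set B : Matrix (Fin m) {l // μ l ≠ 0} ℝ :=
    fun b i => Real.sqrt (σ i.1) * vv W i.1 b with hB
  set E : Matrix {l // μ l ≠ 0} (Fin k) ℝ := fun i j => if f i = j then 1 else 0 with hEdef
  have hE : E * Eᵀ = 1 := by
    ext i i'
    by_cases h : i = i'
    · subst h; simp only [Matrix.mul_apply, transpose_apply]; simp [hEdef, Matrix.mul_apply, Matrix.one_apply, Finset.sum_ite_eq]
    · simp only [Matrix.mul_apply, transpose_apply]
      simp [hEdef, Matrix.mul_apply, Matrix.one_apply, Finset.sum_ite_eq, h,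
        (f.injective.ne h : f i ≠ f i')]
  refine ⟨A * E, B * E, ?_, ?_⟩
  · rw [transpose_mul, ← Matrix.mul_assoc, Matrix.mul_assoc A E Eᵀ, hE, Matrix.mul_one]
    ext a b
    rw [Matrix.mul_apply]
    have hterm : ∀ i : {l // μ l ≠ 0}, A a i * Bᵀ i b = (W *ᵥ vv W i.1) a * vv W i.1 b := by
      intro i
      have h0 : Real.sqrt (σ i.1) ≠ 0 := ne_of_gt (Real.sqrt_pos.mpr (hσpos i))
      simp only [transpose_apply]; simp only [hA, hB]
      field_simp
    rw [Finset.sum_congr rfl (fun i _ => hterm i)]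
    rw [sum_subtype_eq_sum_univ (fun l => μ l ≠ 0)
      (fun l => (W *ᵥ vv W l) a * vv W l b)
      (fun l hl => by show (W *ᵥ vv W l) a * vv W l b = 0
                      rw [Mv_zero W l (not_not.mp hl)]; simp)]
    exact (decomp_M W a b).symm
  · have hAfrob : frobSq (A * E) = ∑ i : {l // μ l ≠ 0}, σ i.1 := by
      rw [frobSq_eq_frobSq2, frobSq2_mul_orth A E hE, frobSq2, Finset.sum_comm]
      refine Finset.sum_congr rfl fun i _ => ?_
      have h0 : (0:ℝ) < σ i.1 := hσpos i
      have : ∑ a, (A a i)^2 = (∑ a, ((W *ᵥ vv W i.1) a)^2) / (Real.sqrt (σ i.1))^2 := by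
        rw [Finset.sum_div]
        exact Finset.sum_congr rfl fun a _ => by rw [hA]; ring
      rw [this, Mv_norm, Real.sq_sqrt h0.le, ← hμdef]
      rw [show μ i.1 = σ i.1 * σ i.1 from
        (Real.mul_self_sqrt (mu_nonneg W i.1)).symm]
      field_simp
    have hBfrob : frobSq (B * E) = ∑ i : {l // μ l ≠ 0}, σ i.1 := by
      rw [frobSq_eq_frobSq2, frobSq2_mul_orth B E hE, frobSq2, Finset.sum_comm]
      refine Finset.sum_congr rfl fun i _ => ?_
      have h0 : (0:ℝ) < σ i.1 := hσpos i
      have : ∑ b, (B b i)^2 = (Real.sqrt (σ i.1))^2 * ∑ b, (vv W i.1 b)^2 := by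
        rw [Finset.mul_sum]
        exact Finset.sum_congr rfl fun b _ => by rw [hB]; ring
      rw [this, vv_norm, Real.sq_sqrt h0.le, mul_one]
    rw [hAfrob, hBfrob, traceNorm_eq_sum_sqrt_mu]
    rw [sum_subtype_eq_sum_univ (fun l => μ l ≠ 0) σ
      (fun l hl => by rw [hσdef]; simp [not_not.mp hl])]
    rw [← hμdef]
    ring

lemma dot_le_half {ι : Type*} [Fintype ι] (a b : ι → ℝ) :
    a ⬝ᵥ b ≤ (a ⬝ᵥ a + b ⬝ᵥ b) / 2 := by
  have h : ∀ i, a i * b i ≤ (a i * a i + b i * b i)/2 :=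
    fun i => by nlinarith [sq_nonneg (a i - b i)]
  calc a ⬝ᵥ b = ∑ i, a i * b i := rfl
  _ ≤ ∑ i, (a i * a i + b i * b i)/2 := Finset.sum_le_sum (fun i _ => h i)
  _ = (a ⬝ᵥ a + b ⬝ᵥ b)/2 := by
      rw [dotProduct, dotProduct, ← Finset.sum_add_distrib, Finset.sum_div]

lemma traceNorm_factored_le {n m k : ℕ} (U : Matrix (Fin n) (Fin k) ℝ)
    (V : Matrix (Fin m) (Fin k) ℝ) :
    traceNorm (U * Vᵀ) ≤ (frobSq U + frobSq V) / 2 := by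
  classical
  set M := U * Vᵀ with hMdef
  set μ := mu M with hμdef
  set σ : Fin m → ℝ := fun l => Real.sqrt (μ l) with hσdef
  set S := Finset.univ.filter (fun l => μ l ≠ 0) with hSdef
  set uu : Fin m → Fin n → ℝ := fun l => (σ l)⁻¹ • (M *ᵥ vv M l) with huu
  set x : Fin m → ℝ := fun l => (Uᵀ *ᵥ uu l) ⬝ᵥ (Uᵀ *ᵥ uu l) with hx
  set y : Fin m → ℝ := fun l => (Vᵀ *ᵥ vv M l) ⬝ᵥ (Vᵀ *ᵥ vv M l) with hy
  have hσnonneg : ∀ l, 0 ≤ σ l := fun l => Real.sqrt_nonneg _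
  have hμσ : ∀ l, μ l = σ l * σ l := fun l => (Real.mul_self_sqrt (mu_nonneg M l)).symm
  have hσS : ∀ l ∈ S, σ l ≠ 0 := by
    intro l hl h0
    rw [hSdef] at hl
    exact (Finset.mem_filter.mp hl).2 ((Real.sqrt_eq_zero (mu_nonneg M l)).mp h0)
  -- traceNorm as a sum over S
  have h1 : traceNorm M = ∑ l ∈ S, σ l := by
    rw [traceNorm_eq_sum_sqrt_mu, ← hμdef, hSdef]
    refine (Finset.sum_filter_of_ne ?_).symm
    intro l _ h h0
    exact h (by show Real.sqrt (μ l) = 0; rw [h0, Real.sqrt_zero])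
  -- per-term bound
  have h2 : ∀ l ∈ S, σ l ≤ (x l + y l) / 2 := by
    intro l hl
    have hσl : σ l ≠ 0 := hσS l hl
    have hstep : σ l = uu l ⬝ᵥ (M *ᵥ vv M l) := by
      rw [huu]
      simp only [smul_dotProduct, smul_eq_mul]
      have hdot : (M *ᵥ vv M l) ⬝ᵥ (M *ᵥ vv M l) = μ l := by
        have := Mv_dot M l l; simpa using this
      rw [hdot, hμσ l]
      field_simp
    have hsplit : uu l ⬝ᵥ (M *ᵥ vv M l) = (Uᵀ *ᵥ uu l) ⬝ᵥ (Vᵀ *ᵥ vv M l) := by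
      rw [hMdef, ← Matrix.mulVec_mulVec, Matrix.dotProduct_mulVec,
        show uu l ᵥ* U = Uᵀ *ᵥ uu l by rw [← Matrix.vecMul_transpose Uᵀ, transpose_transpose]]
    rw [hstep, hsplit]
    exact dot_le_half _ _
  -- the V side
  have hQ1 : ∀ b l, vv M l b = ((Matrix.IsHermitian.eigenvectorUnitary
      (isHermitian_transpose_mul_self_real M) : Matrix (Fin m) (Fin m) ℝ)) b l :=
    fun b l => rfl
  have hysum : ∑ l ∈ S, y l ≤ frobSq V := by
    have hall : ∑ l, y l = frobSq2 (Vᵀ * ((Matrix.IsHermitian.eigenvectorUnitary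
        (isHermitian_transpose_mul_self_real M) : Matrix (Fin m) (Fin m) ℝ))) := by
      rw [frobSq2, Finset.sum_comm]
      refine Finset.sum_congr rfl fun l _ => ?_
      simp only [hy, dotProduct, Matrix.mul_apply, Matrix.mulVec, dotProduct, pow_two]
      rfl
    have horth : ((Matrix.IsHermitian.eigenvectorUnitary
        (isHermitian_transpose_mul_self_real M) : Matrix (Fin m) (Fin m) ℝ)) *
        ((Matrix.IsHermitian.eigenvectorUnitary
        (isHermitian_transpose_mul_self_real M) : Matrix (Fin m) (Fin m) ℝ))ᵀ = 1 := by
      have h := Matrix.mem_unitaryGroup_iff.mp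
        (Matrix.IsHermitian.eigenvectorUnitary (isHermitian_transpose_mul_self_real M)).2
      rwa [Matrix.star_eq_conjTranspose, Matrix.conjTranspose_eq_transpose_of_trivial] at h
    calc ∑ l ∈ S, y l ≤ ∑ l, y l := by
          refine Finset.sum_le_sum_of_subset_of_nonneg (Finset.subset_univ S)
            (fun l _ _ => ?_)
          exact Finset.sum_nonneg fun j _ => mul_self_nonneg _
    _ = frobSq V := by
          rw [hall, frobSq2_mul_orth _ _ horth, frobSq2_transpose, frobSq_eq_frobSq2]
  -- the U side
  have hxsum : ∑ l ∈ S, x l ≤ frobSq U := by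
    set P : Matrix (Fin n) {l // μ l ≠ 0} ℝ := fun a i => uu i.1 a with hP
    have hPorth : Pᵀ * P = 1 := by
      ext i i'
      have : (Pᵀ * P) i i' = (σ i.1)⁻¹ * ((σ i'.1)⁻¹ * ((M *ᵥ vv M i.1) ⬝ᵥ (M *ᵥ vv M i'.1))) := by
        simp only [Matrix.mul_apply, transpose_apply]
        simp only [hP, huu, Pi.smul_apply, smul_eq_mul,
          dotProduct, Finset.mul_sum]
        refine Finset.sum_congr rfl fun a _ => by ring
      rw [this, Mv_dot, ← hμdef]
      by_cases h : i = i'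
      · subst h
        have hσl : σ i.1 ≠ 0 := fun h0 => i.2 ((Real.sqrt_eq_zero (mu_nonneg M i.1)).mp h0)
        simp only [if_pos rfl, mul_one, Matrix.one_apply_eq, ↓reduceIte]
        rw [hμσ i.1]
        field_simp
      · have : i.1 ≠ i'.1 := fun hc => h (Subtype.ext hc)
        simp [this, Matrix.one_apply, h]
    have hsub : ∑ l ∈ S, x l = ∑ i : {l // μ l ≠ 0}, x i.1 :=
      Finset.sum_subtype S (by simp [hSdef]) x
    have hfr : ∑ i : {l // μ l ≠ 0}, x i.1 = frobSq2 (Uᵀ * P) := by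
      rw [frobSq2, Finset.sum_comm]
      refine Finset.sum_congr rfl fun i _ => ?_
      simp only [hx, dotProduct, Matrix.mul_apply, Matrix.mulVec, dotProduct, pow_two]
      simp only [hP]
    rw [hsub, hfr, frobSq_eq_frobSq2]
    calc frobSq2 (Uᵀ * P) ≤ frobSq2 Uᵀ := frobSq2_mul_contract Uᵀ P hPorth
    _ = frobSq2 U := frobSq2_transpose U
  -- combine
  rw [h1]
  calc ∑ l ∈ S, σ l ≤ ∑ l ∈ S, (x l + y l)/2 := Finset.sum_le_sum h2
  _ = ((∑ l ∈ S, x l) + ∑ l ∈ S, y l)/2 := by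
      rw [← Finset.sum_add_distrib, Finset.sum_div]
  _ ≤ (frobSq U + frobSq V)/2 := by linarith

/-- Equivalence of the factored problem Eq. (12) and the rank-constrained
trace-norm-regularized problem Eq. (6):
inf_{U,V} (λ/2)(‖U‖_F² + ‖V‖_F²) + L(UVᵀ) = inf_{rank W ≤ k} λ‖W‖_* + L(W). -/
theorem factored_eq_rank_constrained_inf {n m k : ℕ} (hk : 1 ≤ k)
    (lam : ℝ) (hlam : 0 ≤ lam) (L : Matrix (Fin n) (Fin m) ℝ → ℝ) :
    sInf {c : ℝ | ∃ (U : Matrix (Fin n) (Fin k) ℝ) (V : Matrix (Fin m) (Fin k) ℝ),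
        c = (lam/2) * (frobSq U + frobSq V) + L (U * Vᵀ)}
      = sInf {c : ℝ | ∃ W : Matrix (Fin n) (Fin m) ℝ,
          W.rank ≤ k ∧ c = lam * traceNorm W + L W} := by
  set A := {c : ℝ | ∃ (U : Matrix (Fin n) (Fin k) ℝ) (V : Matrix (Fin m) (Fin k) ℝ),
      c = (lam/2) * (frobSq U + frobSq V) + L (U * Vᵀ)} with hA
  set B := {c : ℝ | ∃ W : Matrix (Fin n) (Fin m) ℝ,
      W.rank ≤ k ∧ c = lam * traceNorm W + L W} with hB
  have hBA : B ⊆ A := by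
    rintro c ⟨W, hW, rfl⟩
    obtain ⟨U, V, hUV, hfr⟩ := exists_factorization W hW
    exact ⟨U, V, by rw [hUV, hfr]; ring⟩
  have h1 : ∀ a ∈ A, ∃ b ∈ B, b ≤ a := by
    rintro a ⟨U, V, rfl⟩
    refine ⟨lam * traceNorm (U * Vᵀ) + L (U * Vᵀ), ⟨U * Vᵀ, ?_, rfl⟩, ?_⟩
    · calc (U * Vᵀ).rank ≤ U.rank := Matrix.rank_mul_le_left U Vᵀ
      _ ≤ k := le_trans (Matrix.rank_le_card_width U) (by simp)
    · have h := mul_le_mul_of_nonneg_left (traceNorm_factored_le U V) hlam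
      linarith
  have hBne : B.Nonempty :=
    ⟨lam * traceNorm 0 + L 0, 0, by simp [Matrix.rank_zero], rfl⟩
  have hAne : A.Nonempty := ⟨_, hBA hBne.choose_spec⟩
  by_cases hbdd : BddBelow A
  · have hbddB : BddBelow B := hbdd.mono hBA
    apply le_antisymm
    · exact csInf_le_csInf hbdd hBne hBA
    · apply le_csInf hAne
      rintro a ha
      obtain ⟨b, hb, hba⟩ := h1 a ha
      exact le_trans (csInf_le hbddB hb) hba
  · have hbddB : ¬ BddBelow B := by
      rintro ⟨c, hc⟩
      apply hbdd
      refine ⟨c, fun a ha => ?_⟩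
      obtain ⟨b, hb, hba⟩ := h1 a ha
      exact le_trans (hc hb) hba
    rw [Real.sInf_of_not_bddBelow hbdd, Real.sInf_of_not_bddBelow hbddB]
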